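/- For every positive integer n and every set U ⊆ ℤ^n with |U| = 2^(2^(n-1)) + 1, there exist three pairwise distinct points u, v, w ∈ U with d₁(u,w) = d₁(u,v) + d₁(v,w); consequently every general position set in ℤ^n has at most 2^(2^(n-1)) elements. -/

import Mathlib

/-- The ℓ1 (graph) distance on the integer lattice ℤ^n. -/
def d1 {n : ℕ} (u v : Fin n → ℤ) : ℤ := ∑ i, |u i - v i|

/-- A set `S ⊆ ℤ^n` is a general position set if no three pairwise distinct
points of `S` lie on a common geodesic of the grid graph `P_∞^n`. -/
def IsGPSet {n : ℕ} (S : Set (Fin n → ℤ)) : Prop :=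
  ∀ u ∈ S, ∀ v ∈ S, ∀ w ∈ S, u ≠ v → u ≠ w → v ≠ w →
    d1 u w ≠ d1 u v + d1 v w

lemma gp_abs_between {a b c : ℤ} (h : a ≤ b ∧ b ≤ c ∨ c ≤ b ∧ b ≤ a) :
    |a - c| = |a - b| + |b - c| := by
  rcases abs_cases (a - c) with ⟨h1, _⟩ | ⟨h1, _⟩ <;>
  rcases abs_cases (a - b) with ⟨h2, _⟩ | ⟨h2, _⟩ <;>
  rcases abs_cases (b - c) with ⟨h3, _⟩ | ⟨h3, _⟩ <;> omega

lemma gp_lex_fst {k : ℕ} {a b : Fin (k+1) → ℤ} (h : toLex a < toLex b) : a 0 ≤ b 0 := by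
  obtain ⟨i, hji, hi⟩ := h
  rcases eq_or_lt_of_le (Fin.zero_le i) with h0 | h0
  · exact le_of_lt (h0 ▸ hi)
  · exact le_of_eq (hji 0 h0)

lemma gp_lex_ne {k : ℕ} {a b : Fin (k+1) → ℤ} (h : toLex a < toLex b) : a ≠ b := by
  intro e; exact absurd h (by simp [e]; exact lt_irrefl _)

lemma gp_key (k : ℕ) (U : Set (Fin (k+1) → ℤ)) (hU : U.encard = 2 ^ 2 ^ k + 1) :
    ∃ u ∈ U, ∃ v ∈ U, ∃ w ∈ U, u ≠ v ∧ u ≠ w ∧ v ≠ w ∧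
      d1 u w = d1 u v + d1 v w := by
  classical
  haveI hwf : WellFoundedLT (Fin (k+1)) := inferInstance
  letI : LinearOrder (Lex (Fin (k+1) → ℤ)) :=
    @Pi.Lex.linearOrder (Fin (k+1)) (fun _ => ℤ) _ hwf _
  have hU' : U.encard = ((2 ^ 2 ^ k + 1 : ℕ) : ℕ∞) := by rw [hU]; push_cast; ring
  have hfin : U.Finite := Set.finite_of_encard_eq_coe hU'
  set F : Finset (Fin (k+1) → ℤ) := hfin.toFinset with hF
  have hFcard : F.card = 2 ^ 2 ^ k + 1 := by
    have := hfin.encard_eq_coe_toFinset_card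
    rw [hU'] at this
    exact_mod_cast this.symm
  by_contra hno
  push_neg at hno
  -- color of an ordered pair
  set col : (Fin (k+1) → ℤ) → (Fin (k+1) → ℤ) → (Fin k → Bool) :=
    fun x y j => decide (x j.succ ≤ y j.succ) with hcol
  set f : (Fin (k+1) → ℤ) → Finset (Fin k → Bool) :=
    fun x => Finset.univ.filter (fun c => ∃ y ∈ F, toLex y < toLex x ∧ col y x = c) with hf
  -- betweenness from matching colors
  have hmid : ∀ z x y : Fin (k+1) → ℤ, toLex z < toLex x → toLex x < toLex y →
      col z x = col x y → d1 z y = d1 z x + d1 x y := by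
    intro z x y hzx hxy hc
    have hcoord : ∀ i, |z i - y i| = |z i - x i| + |x i - y i| := by
      intro i
      induction i using Fin.cases with
      | zero =>
        exact gp_abs_between (Or.inl ⟨gp_lex_fst hzx, gp_lex_fst hxy⟩)
      | succ j =>
        have hcj : decide (z j.succ ≤ x j.succ) = decide (x j.succ ≤ y j.succ) :=
          congrFun hc j
        rcases le_or_gt (z j.succ) (x j.succ) with h1 | h1
        · have h2 : x j.succ ≤ y j.succ := by
            by_contra h2
            simp [h1, h2] at hcj
          exact gp_abs_between (Or.inl ⟨h1, h2⟩)
        · have h2 : y j.succ < x j.succ := by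
            by_contra h2
            push_neg at h2
            simp [h1.not_ge, h2] at hcj
          exact gp_abs_between (Or.inr ⟨h2.le, h1.le⟩)
    simp only [d1, ← Finset.sum_add_distrib]
    exact Finset.sum_congr rfl fun i _ => hcoord i
  -- f is injective on F
  have hinj : Set.InjOn f F := by
    intro x hx y hy hfxy
    by_contra hne
    -- wlog x <lex y
    rcases lt_trichotomy (α := Lex (Fin (k+1) → ℤ)) (toLex x) (toLex y) with hlt | heq | hlt
    · have hmem : col x y ∈ f y := by
        simp only [hf, Finset.mem_filter, Finset.mem_univ, true_and]
        exact ⟨x, hx, hlt, rfl⟩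
      rw [← hfxy] at hmem
      simp only [hf, Finset.mem_filter, Finset.mem_univ, true_and] at hmem
      obtain ⟨z, hz, hzx, hcz⟩ := hmem
      have hd := hmid z x y hzx hlt hcz
      have hzy : toLex z < toLex y := hzx.trans hlt
      exact hno z (hfin.mem_toFinset.mp hz) x (hfin.mem_toFinset.mp hx)
        y (hfin.mem_toFinset.mp hy) (gp_lex_ne hzx) (gp_lex_ne hzy)
        (gp_lex_ne hlt) hd
    · exact hne (toLex.injective heq)
    · have hmem : col y x ∈ f x := by
        simp only [hf, Finset.mem_filter, Finset.mem_univ, true_and]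
        exact ⟨y, hy, hlt, rfl⟩
      rw [hfxy] at hmem
      simp only [hf, Finset.mem_filter, Finset.mem_univ, true_and] at hmem
      obtain ⟨z, hz, hzy, hcz⟩ := hmem
      have hd := hmid z y x hzy hlt hcz
      have hzx : toLex z < toLex x := hzy.trans hlt
      exact hno z (hfin.mem_toFinset.mp hz) y (hfin.mem_toFinset.mp hy)
        x (hfin.mem_toFinset.mp hx) (gp_lex_ne hzy) (gp_lex_ne hzx)
        (gp_lex_ne hlt) hd
  have hle : F.card ≤ (Finset.univ : Finset (Finset (Fin k → Bool))).card :=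
    Finset.card_le_card_of_injOn f (fun a _ => Finset.mem_univ _)
      (by intro a ha b hb; exact hinj (by simpa using ha) (by simpa using hb))
  rw [Finset.card_univ, Fintype.card_finset] at hle
  simp [Fintype.card_fun] at hle
  omega

/-- Every set of `2^(2^(n-1)) + 1` points of `ℤ^n` contains three pairwise
distinct points lying on a common geodesic; consequently every general
position set of `ℤ^n` has at most `2^(2^(n-1))` elements. -/
theorem gp_upper_bound_of_integer_lattice (n : ℕ) (hn : 0 < n) :
    (∀ U : Set (Fin n → ℤ), U.encard = 2 ^ 2 ^ (n - 1) + 1 →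
      ∃ u ∈ U, ∃ v ∈ U, ∃ w ∈ U, u ≠ v ∧ u ≠ w ∧ v ≠ w ∧
        d1 u w = d1 u v + d1 v w) ∧
    (∀ S : Set (Fin n → ℤ), IsGPSet S → S.encard ≤ 2 ^ 2 ^ (n - 1)) := by
  obtain ⟨k, rfl⟩ : ∃ k, n = k + 1 := ⟨n - 1, (Nat.succ_pred_eq_of_pos hn).symm⟩
  simp only [Nat.add_sub_cancel]
  have part1 := gp_key k
  refine ⟨part1, ?_⟩
  intro S hS
  by_contra h
  push_neg at h
  have hne : (2 : ℕ∞) ^ 2 ^ k ≠ ⊤ := by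
    have : ((2 ^ 2 ^ k : ℕ) : ℕ∞) = 2 ^ 2 ^ k := by push_cast; ring
    rw [← this]; exact ENat.coe_ne_top _
  have hle : (2 : ℕ∞) ^ 2 ^ k + 1 ≤ S.encard := (ENat.add_one_le_iff hne).mpr h
  obtain ⟨U, hUS, hUcard⟩ := Set.exists_subset_encard_eq hle
  obtain ⟨u, hu, v, hv, w, hw, h1, h2, h3, hd⟩ := part1 U hUcard
  exact hS u (hUS hu) v (hUS hv) w (hUS hw) h1 h2 h3 hd
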